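/- Let A, X ∈ B(H,K) with A ≠ 0. Then ‖A + λX‖ ≥ ‖A‖ for all λ ∈ ℂ if and only if for every δ > 0 and every θ ∈ [0, 2π), sup { Re(e^{iθ}⟨Xφ, Aφ⟩) : φ unit vector in the range of E_{A*A}[‖A‖²−δ, ‖A‖²] } ≥ 0. -/

import Mathlib

open ContinuousLinearMap Filter Set Real

/-- The range of the spectral projection `E_T S` of a (selfadjoint) operator `T`
for a closed set `S ⊆ ℝ`. -/
noncomputable def spectralSubspace {H : Type*} [NormedAddCommGroup H]
    [InnerProductSpace ℂ H] [CompleteSpace H] (T : H →L[ℂ] H) (S : Set ℝ) : Set H :=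
  {φ | ∀ f : ℝ → ℝ, Continuous f → (∀ x ∈ S, f x = 0) → cfc f T φ = 0}

set_option linter.unusedSectionVars false
set_option linter.unusedVariables false
set_option maxHeartbeats 1000000

/-- A continuous cutoff function: `0` on `(-∞, M-δ]`, `1` on `[M-δ/2, ∞)`. -/
noncomputable def bhkGcut (M δ : ℝ) : ℝ → ℝ :=
  fun x => min 1 (max 0 ((2 / δ) * (x - (M - δ))))

lemma bhkGcut_cont (M δ : ℝ) : Continuous (bhkGcut M δ) := by
  unfold bhkGcut; fun_prop

lemma bhkGcut_mem (M δ : ℝ) (x : ℝ) : bhkGcut M δ x ∈ Set.Icc (0:ℝ) 1 :=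
  ⟨le_min zero_le_one (le_max_left _ _), min_le_left _ _⟩

lemma bhkGcut_zero (M δ : ℝ) (hδ : 0 < δ) {x : ℝ} (hx : x ≤ M - δ) : bhkGcut M δ x = 0 := by
  unfold bhkGcut
  have h1 : (2 / δ) * (x - (M - δ)) ≤ 0 :=
    mul_nonpos_of_nonneg_of_nonpos (by positivity) (by linarith)
  rw [max_eq_left h1, min_eq_right zero_le_one]

lemma bhkGcut_key (M δ : ℝ) (hδ : 0 < δ) {x : ℝ} (hx0 : 0 ≤ x) (hxM : x ≤ M) :
    x ≤ M - δ * (1 - bhkGcut M δ x) ^ 2 := by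
  unfold bhkGcut
  rcases le_or_gt x (M - δ) with h | h
  · have := bhkGcut_zero M δ hδ h
    unfold bhkGcut at this
    rw [this]
    simpa using h
  · set u := (2 / δ) * (x - (M - δ)) with hu
    have hu0 : 0 ≤ u := by
      apply mul_nonneg (by positivity)
      linarith
    rw [max_eq_right hu0]
    rcases le_or_gt 1 u with h1 | h1
    · rw [min_eq_left h1]; simpa using hxM
    · rw [min_eq_right (le_of_lt h1)]
      have hδ' : δ ≠ 0 := ne_of_gt hδ
      have hue : u * δ = 2 * (x - (M - δ)) := by
        rw [hu]; field_simp
      nlinarith [mul_pos hδ (by linarith : (0:ℝ) < x - (M - δ)), h1, hu0,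
        mul_nonneg hu0 (by linarith : (0:ℝ) < x - (M - δ)).le]

section auxA
variable {H K : Type*} [NormedAddCommGroup H] [InnerProductSpace ℂ H] [CompleteSpace H]
    [NormedAddCommGroup K] [InnerProductSpace ℂ K] [CompleteSpace K]

local notation "⟪" x ", " y "⟫" => @inner ℂ _ _ x y

lemma bhkT_sa (A : H →L[ℂ] K) : IsSelfAdjoint ((adjoint A) ∘L A) := by
  rw [ContinuousLinearMap.isSelfAdjoint_iff', adjoint_comp, adjoint_adjoint]

lemma bhkT_nonneg (A : H →L[ℂ] K) : (0 : H →L[ℂ] H) ≤ (adjoint A) ∘L A := by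
  rw [ContinuousLinearMap.nonneg_iff_isPositive]
  refine ⟨(bhkT_sa A).isSymmetric, fun x => ?_⟩
  rw [ContinuousLinearMap.reApplyInnerSelf, ContinuousLinearMap.comp_apply,
    ContinuousLinearMap.adjoint_inner_left]
  exact inner_self_nonneg

lemma bhkT_inner (A : H →L[ℂ] K) (φ : H) :
    RCLike.re ⟪((adjoint A ∘L A) φ), φ⟫ = ‖A φ‖ ^ 2 := by
  rw [ContinuousLinearMap.comp_apply, ContinuousLinearMap.adjoint_inner_left]
  simp [inner_self_eq_norm_sq]
  rw [← Complex.ofReal_pow, Complex.ofReal_re]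

lemma bhk_nontrivial (A : H →L[ℂ] K) (hA : A ≠ 0) : Nontrivial H := by
  obtain ⟨v, hv⟩ : ∃ v, A v ≠ 0 := by
    by_contra h
    push_neg at h
    exact hA (by ext v; simp [h v])
  exact ⟨v, 0, fun h => hv (by simp [h])⟩

lemma bhk_normT (A : H →L[ℂ] K) : ‖(adjoint A) ∘L A‖ = ‖A‖ ^ 2 := by
  rw [norm_adjoint_comp_self, sq]

lemma bhk_spec_sub (A : H →L[ℂ] K) (hA : A ≠ 0) :
    spectrum ℝ ((adjoint A) ∘L A) ⊆ Set.Icc 0 (‖A‖ ^ 2) := by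
  have := bhk_nontrivial A hA
  intro x hx
  refine ⟨spectrum_nonneg_of_nonneg (bhkT_nonneg A) hx, ?_⟩
  have : Nontrivial (H →L[ℂ] H) := ⟨1, 0, one_ne_zero⟩
  have h := spectrum.norm_le_norm_of_mem hx
  rw [bhk_normT] at h
  calc x ≤ |x| := le_abs_self x
  _ ≤ ‖A‖ ^ 2 := by simpa using h

lemma bhk_spec_mem (A : H →L[ℂ] K) (hA : A ≠ 0) :
    ‖A‖ ^ 2 ∈ spectrum ℝ ((adjoint A) ∘L A) := by
  have := bhk_nontrivial A hA
  have : Nontrivial (H →L[ℂ] H) := ⟨1, 0, one_ne_zero⟩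
  have h := CStarAlgebra.norm_mem_spectrum_of_nonneg (bhkT_nonneg A)
  rwa [bhk_normT] at h

end auxA

section auxB
variable {H : Type*} [NormedAddCommGroup H] [InnerProductSpace ℂ H] [CompleteSpace H]

local notation "⟪" x ", " y "⟫" => @inner ℂ _ _ x y

lemma bhk_smul_mem (T : H →L[ℂ] H) (S : Set ℝ) (c : ℂ) {φ : H}
    (hφ : φ ∈ spectralSubspace T S) : c • φ ∈ spectralSubspace T S := by
  intro f hf hf0
  rw [map_smul, hφ f hf hf0, smul_zero]

lemma bhk_memSS (T : H →L[ℂ] H) (hT : IsSelfAdjoint T) {M δ : ℝ}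
    (hspec : spectrum ℝ T ⊆ Set.Icc 0 M)
    (g : ℝ → ℝ) (hg : Continuous g) (hgz : ∀ x ≤ M - δ, g x = 0) (ψ : H) :
    cfc g T ψ ∈ spectralSubspace T (Set.Icc (M - δ) M) := by
  intro f hf hf0
  have hcomp : cfc f T (cfc g T ψ) = cfc (fun x => f x * g x) T ψ := by
    rw [cfc_mul f g T]; rfl
  rw [hcomp]
  have : cfc (fun x => f x * g x) T = cfc (fun _ : ℝ => (0:ℝ)) T := by
    apply cfc_congr
    intro x hx
    rcases le_or_gt x (M - δ) with h | h
    · simp [hgz x h]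
    · simp [hf0 x ⟨le_of_lt h, (hspec hx).2⟩]
  rw [this, cfc_const 0 T]
  simp

lemma bhk_cfc_norm_le (T : H →L[ℂ] H) (hT : IsSelfAdjoint T) (g : ℝ → ℝ) (hg : Continuous g)
    (hb : ∀ x ∈ spectrum ℝ T, |g x| ≤ 1) (φ : H) : ‖cfc g T φ‖ ≤ ‖φ‖ := by
  calc ‖cfc g T φ‖ ≤ ‖cfc g T‖ * ‖φ‖ := le_opNorm _ _
  _ ≤ 1 * ‖φ‖ := by
      gcongr
      exact norm_cfc_le zero_le_one fun x hx => by simpa using hb x hx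
  _ = ‖φ‖ := one_mul _

lemma bhk_unit (T : H →L[ℂ] H) [Nontrivial H] (hT : IsSelfAdjoint T) {M δ : ℝ} (hδ : 0 < δ)
    (hspec : spectrum ℝ T ⊆ Set.Icc 0 M) (hM : M ∈ spectrum ℝ T) :
    ∃ φ : H, ‖φ‖ = 1 ∧ φ ∈ spectralSubspace T (Set.Icc (M - δ) M) := by
  set g := bhkGcut M δ with hgdef
  have hg : Continuous g := bhkGcut_cont M δ
  have hgz : ∀ x ≤ M - δ, g x = 0 := fun x hx => bhkGcut_zero M δ hδ hx
  have hne : cfc g T ≠ 0 := by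
    intro hzero
    have hmap := cfc_map_spectrum (R := ℝ) g T
    rw [hzero] at hmap
    have h1 : (1:ℝ) ∈ spectrum ℝ (0 : H →L[ℂ] H) := by
      rw [hmap]
      refine ⟨M, hM, ?_⟩
      rw [hgdef]; unfold bhkGcut
      have h1 : (2 / δ) * (M - (M - δ)) = 2 := by field_simp; ring
      rw [h1]; norm_num
    rw [spectrum.zero_eq] at h1
    simp at h1
  obtain ⟨ψ, hψ⟩ : ∃ ψ, cfc g T ψ ≠ 0 := by
    by_contra hc
    push_neg at hc
    exact hne (by ext ψ; simpa using hc ψ)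
  set v := cfc g T ψ with hv
  have hmem : v ∈ spectralSubspace T (Set.Icc (M - δ) M) := bhk_memSS T hT hspec g hg hgz ψ
  have hvne : ‖v‖ ≠ 0 := norm_ne_zero_iff.mpr hψ
  refine ⟨(‖v‖ : ℂ)⁻¹ • v, ?_, bhk_smul_mem T _ _ hmem⟩
  rw [norm_smul]
  simp only [norm_inv, Complex.norm_real, Real.norm_eq_abs, abs_norm]
  rw [inv_mul_cancel₀ hvne]

lemma bhk_lower (T : H →L[ℂ] H) (hT : IsSelfAdjoint T) {M δ : ℝ}
    (hspec : spectrum ℝ T ⊆ Set.Icc 0 M) {φ : H}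
    (hφ : φ ∈ spectralSubspace T (Set.Icc (M - δ) M)) :
    (M - δ) * ‖φ‖ ^ 2 ≤ RCLike.re ⟪T φ, φ⟫ := by
  set f : ℝ → ℝ := fun x => max (M - δ - x) 0 with hfdef
  have hf : Continuous f := by fun_prop
  have hf0 : ∀ x ∈ Set.Icc (M - δ) M, f x = 0 := fun x hx => by
    have h1 : M - δ - x ≤ 0 := by linarith [hx.1]
    simp only [hfdef]
    rw [max_eq_right h1]
  have hz : cfc f T φ = 0 := hφ f hf hf0
  have key : ∀ x ∈ spectrum ℝ T, (fun _ : ℝ => M - δ) x ≤ (fun x => x + f x) x := by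
    intro x hx
    simp only [hfdef]
    rcases le_or_gt (M - δ - x) 0 with h | h
    · rw [max_eq_right h]; linarith
    · rw [max_eq_left h.le]; linarith
  have h1 : RCLike.re ⟪(cfc (fun _ : ℝ => M - δ) T) φ, φ⟫ ≤
      RCLike.re ⟪(cfc (fun x => x + f x) T) φ, φ⟫ := by
    have h0 : (0 : H →L[ℂ] H) ≤ cfc (fun x => (x + f x) - (M - δ)) T :=
      cfc_nonneg fun x hx => sub_nonneg.mpr (key x hx)
    rw [cfc_sub (fun x => x + f x) (fun _ => M - δ) T,
      ContinuousLinearMap.nonneg_iff_isPositive] at h0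
    have := h0.2 φ
    rw [ContinuousLinearMap.reApplyInnerSelf, ContinuousLinearMap.sub_apply,
      inner_sub_left, map_sub] at this
    linarith
  have h2 : cfc (fun x => x + f x) T = T + cfc f T := by
    have h6 := cfc_add (a := T) (_root_.id : ℝ → ℝ) f
    simp only [_root_.id] at h6
    rw [h6, cfc_id ℝ T]
  have h3 : RCLike.re ⟪(cfc (fun x => x + f x) T) φ, φ⟫ = RCLike.re ⟪T φ, φ⟫ := by
    rw [h2, ContinuousLinearMap.add_apply, hz, add_zero]
  have h4 : RCLike.re ⟪(cfc (fun _ : ℝ => M - δ) T) φ, φ⟫ = (M - δ) * ‖φ‖ ^ 2 := by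
    rw [cfc_const (M - δ) T]
    have h5 : (algebraMap ℝ (H →L[ℂ] H) (M - δ)) φ = ((M - δ : ℝ) : ℂ) • φ := by
      simp [Algebra.algebraMap_eq_smul_one]
      norm_cast
    rw [h5, inner_smul_left]
    simp [inner_self_eq_norm_sq]
    left; rw [← Complex.ofReal_pow, Complex.ofReal_re]
  rw [h4, h3] at h1
  exact h1

lemma bhk_phi2_sq (T : H →L[ℂ] H) (hT : IsSelfAdjoint T) (h : ℝ → ℝ) (hh : Continuous h)
    (φ : H) :
    RCLike.re ⟪(cfc (fun x => h x * h x) T) φ, φ⟫ = ‖cfc h T φ‖ ^ 2 := by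
  have hP : IsSelfAdjoint (cfc h T) := cfc_predicate h T
  rw [cfc_mul h h T]
  have : (cfc h T * cfc h T) φ = cfc h T (cfc h T φ) := rfl
  rw [this]
  have h2 : ⟪cfc h T (cfc h T φ), φ⟫ = ⟪cfc h T φ, cfc h T φ⟫ := by
    conv_rhs => rw [← ContinuousLinearMap.adjoint_inner_left]
    rw [ContinuousLinearMap.isSelfAdjoint_iff'.mp hP]
  rw [h2]
  simp [inner_self_eq_norm_sq]
  rw [← Complex.ofReal_pow, Complex.ofReal_re]

lemma bhk_phi2_eq (T : H →L[ℂ] H) (hT : IsSelfAdjoint T) (g : ℝ → ℝ) (hg : Continuous g)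
    (φ : H) : φ - cfc g T φ = cfc (fun x => 1 - g x) T φ := by
  have : cfc (fun x : ℝ => 1 - g x) T = cfc (fun _ : ℝ => (1:ℝ)) T - cfc g T :=
    cfc_sub (fun _ => 1) g T
  rw [this]
  have h1 : cfc (fun _ : ℝ => (1:ℝ)) T = 1 := cfc_one ℝ T
  rw [h1, ContinuousLinearMap.sub_apply, ContinuousLinearMap.one_apply]

lemma bhk_upper (T : H →L[ℂ] H) (hT : IsSelfAdjoint T) {M δ : ℝ} (hδ : 0 < δ)
    (hspec : spectrum ℝ T ⊆ Set.Icc 0 M) (φ : H) :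
    RCLike.re ⟪T φ, φ⟫ ≤ M * ‖φ‖ ^ 2 - δ * ‖φ - cfc (bhkGcut M δ) T φ‖ ^ 2 := by
  set g := bhkGcut M δ with hgdef
  have hg : Continuous g := bhkGcut_cont M δ
  have h1mg : Continuous (fun x => 1 - g x) := by fun_prop
  rw [bhk_phi2_eq T hT g hg φ]
  have key : ∀ x ∈ spectrum ℝ T, x + δ * ((1 - g x) * (1 - g x)) ≤ M := by
    intro x hx
    have := bhkGcut_key M δ hδ (hspec hx).1 (hspec hx).2
    rw [← hgdef] at this
    nlinarith [sq_nonneg (1 - g x)]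
  have hmono : RCLike.re ⟪(cfc (fun x => x + δ * ((1 - g x) * (1 - g x))) T) φ, φ⟫ ≤
      RCLike.re ⟪(cfc (fun _ : ℝ => M) T) φ, φ⟫ := by
    have h0 : (0 : H →L[ℂ] H) ≤
        cfc (fun x => M - (x + δ * ((1 - g x) * (1 - g x)))) T :=
      cfc_nonneg fun x hx => sub_nonneg.mpr (key x hx)
    rw [cfc_sub (fun _ => M) (fun x => x + δ * ((1 - g x) * (1 - g x))) T,
      ContinuousLinearMap.nonneg_iff_isPositive] at h0
    have := h0.2 φ
    rw [ContinuousLinearMap.reApplyInnerSelf, ContinuousLinearMap.sub_apply,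
      inner_sub_left, map_sub] at this
    linarith
  have hdecomp : cfc (fun x => x + δ * ((1 - g x) * (1 - g x))) T =
      T + δ • cfc (fun x => (1 - g x) * (1 - g x)) T := by
    have h6 := cfc_add (a := T) (_root_.id : ℝ → ℝ) (fun x => δ * ((1 - g x) * (1 - g x)))
    simp only [_root_.id] at h6
    rw [h6, cfc_id ℝ T]
    congr 1
    have h7 := cfc_smul (a := T) (S := ℝ) δ (fun x => (1 - g x) * (1 - g x))
    simp only [smul_eq_mul] at h7
    exact h7
  have hsmul : RCLike.re ⟪(δ • cfc (fun x => (1 - g x) * (1 - g x)) T) φ, φ⟫ =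
      δ * ‖cfc (fun x => 1 - g x) T φ‖ ^ 2 := by
    rw [ContinuousLinearMap.smul_apply]
    have : (δ • (cfc (fun x => (1 - g x) * (1 - g x)) T φ)) =
        ((δ : ℂ)) • (cfc (fun x => (1 - g x) * (1 - g x)) T φ) := by
      norm_cast
    rw [this, inner_smul_left]
    rw [← bhk_phi2_sq T hT (fun x => 1 - g x) h1mg φ]
    simp
  have hconst : RCLike.re ⟪(cfc (fun _ : ℝ => M) T) φ, φ⟫ = M * ‖φ‖ ^ 2 := by
    rw [cfc_const M T]
    have h5 : (algebraMap ℝ (H →L[ℂ] H) M) φ = ((M : ℝ) : ℂ) • φ := by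
      simp [Algebra.algebraMap_eq_smul_one]
    rw [h5, inner_smul_left]
    simp [inner_self_eq_norm_sq]
    left; rw [← Complex.ofReal_pow, Complex.ofReal_re]
  rw [hdecomp] at hmono
  rw [ContinuousLinearMap.add_apply, inner_add_left, map_add, hsmul, hconst] at hmono
  linarith

end auxB

lemma bhk_arith (δ ε t B Q X2 s : ℝ) (hδ : 0 < δ) (hε : 0 < ε) (ht : 0 < t) (ht1 : t ≤ 1)
    (hQ : δ * Q = B ^ 2) (ht2 : t * (Q + X2) + t ≤ ε) (hs0 : 0 ≤ s) (hX2 : 0 ≤ X2)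
    (hB : 0 ≤ B) :
    -(δ * s ^ 2) + 2 * (t * (-ε + B * s)) + t ^ 2 * X2 ≤ -(t * ε) := by
  have hQ0 : 0 ≤ Q := by
    by_contra hc
    push_neg at hc
    nlinarith [sq_nonneg B]
  have h3 : t * Q + t * X2 + t ≤ ε := by nlinarith
  have h4 : t * (t * Q + t * X2 + t) ≤ t * ε := mul_le_mul_of_nonneg_left (by nlinarith) ht.le
  have h5 : 0 ≤ (δ * s - t * B) ^ 2 := sq_nonneg _
  have h6 : 2 * t * B * s * δ ≤ δ ^ 2 * s ^ 2 + t ^ 2 * (δ * Q) := by nlinarith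
  nlinarith [mul_pos hδ ht, sq_nonneg (δ * s - t * B), mul_pos hδ hδ, ht.le, hδ.le,
    mul_le_mul_of_nonneg_left h6 (le_of_lt (inv_pos.mpr hδ)), hδ.ne',
    mul_pos ht ht]

theorem birkhoff_orthogonality_BHK
    {H K : Type*} [NormedAddCommGroup H] [InnerProductSpace ℂ H] [CompleteSpace H]
    [NormedAddCommGroup K] [InnerProductSpace ℂ K] [CompleteSpace K]
    (A X : H →L[ℂ] K) (hA : A ≠ 0) :
    (∀ lam : ℂ, ‖A + lam • X‖ ≥ ‖A‖) ↔
      (∀ δ : ℝ, 0 < δ → ∀ θ ∈ Set.Ico (0 : ℝ) (2 * π),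
        sSup {r : ℝ | ∃ φ : H,
          φ ∈ spectralSubspace ((adjoint A) ∘L A) (Set.Icc (‖A‖ ^ 2 - δ) (‖A‖ ^ 2)) ∧
          ‖φ‖ = 1 ∧ r = (Complex.exp (θ * Complex.I) * (inner ℂ (A φ) (X φ) : ℂ)).re} ≥ 0) := by
  have hH := bhk_nontrivial A hA
  haveI : Nontrivial H := hH
  set T := (adjoint A) ∘L A with hTdef
  have hT : IsSelfAdjoint T := bhkT_sa A
  set M := ‖A‖ ^ 2 with hMdef
  have hspec : spectrum ℝ T ⊆ Set.Icc 0 M := bhk_spec_sub A hA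
  have hMmem : M ∈ spectrum ℝ T := bhk_spec_mem A hA
  have hAnorm : 0 < ‖A‖ := norm_pos_iff.mpr hA
  have hMpos : 0 < M := by rw [hMdef]; positivity
  -- the sets are bounded above
  have hbdd : ∀ δ θ : ℝ, BddAbove {r : ℝ | ∃ φ : H,
      φ ∈ spectralSubspace T (Set.Icc (M - δ) M) ∧ ‖φ‖ = 1 ∧
      r = (Complex.exp (θ * Complex.I) * (inner ℂ (A φ) (X φ) : ℂ)).re} := by
    intro δ θ
    refine ⟨‖A‖ * ‖X‖, ?_⟩
    rintro r ⟨φ, hφm, hφ1, rfl⟩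
    calc (Complex.exp (θ * Complex.I) * (inner ℂ (A φ) (X φ) : ℂ)).re
        ≤ ‖Complex.exp (θ * Complex.I) * (inner ℂ (A φ) (X φ) : ℂ)‖ :=
          Complex.re_le_norm _
      _ = ‖(inner ℂ (A φ) (X φ) : ℂ)‖ := by
          rw [norm_mul, Complex.norm_exp_ofReal_mul_I, one_mul]
      _ ≤ ‖A φ‖ * ‖X φ‖ := by
          simpa using norm_inner_le_norm (𝕜 := ℂ) (A φ) (X φ)
      _ ≤ ‖A‖ * ‖X‖ := by
          have h1 := A.le_opNorm φ
          have h2 := X.le_opNorm φ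
          rw [hφ1, mul_one] at h1 h2
          exact mul_le_mul h1 h2 (norm_nonneg _) (norm_nonneg _)
  -- the sets are nonempty
  have hne : ∀ δ : ℝ, 0 < δ → ∀ θ : ℝ, Set.Nonempty {r : ℝ | ∃ φ : H,
      φ ∈ spectralSubspace T (Set.Icc (M - δ) M) ∧ ‖φ‖ = 1 ∧
      r = (Complex.exp (θ * Complex.I) * (inner ℂ (A φ) (X φ) : ℂ)).re} := by
    intro δ hδ θ
    obtain ⟨φ, hφ1, hφm⟩ := bhk_unit T hT hδ hspec hMmem
    exact ⟨_, φ, hφm, hφ1, rfl⟩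
  -- norm expansion
  have hexp : ∀ (c : ℂ) (φ : H), ‖(A + c • X) φ‖ ^ 2
      = ‖A φ‖ ^ 2 + 2 * (c * (inner ℂ (A φ) (X φ) : ℂ)).re
        + ‖c‖ ^ 2 * ‖X φ‖ ^ 2 := by
    intro c φ
    rw [ContinuousLinearMap.add_apply, ContinuousLinearMap.smul_apply]
    rw [@norm_add_sq ℂ _ _ _ _ (A φ) (c • X φ), inner_smul_right, norm_smul]
    simp [mul_pow, RCLike.re_to_complex]
  constructor
  · intro hbirk δ hδ θ hθ
    by_contra hneg
    push_neg at hneg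
    set Sδ := {r : ℝ | ∃ φ : H,
        φ ∈ spectralSubspace T (Set.Icc (M - δ) M) ∧ ‖φ‖ = 1 ∧
        r = (Complex.exp (θ * Complex.I) * (inner ℂ (A φ) (X φ) : ℂ)).re} with hSdef
    set ε := -(sSup Sδ) with hεdef
    have hε : 0 < ε := by rw [hεdef]; linarith
    -- upper bound on every vector in the spectral subspace
    have hub : ∀ ψ : H, ψ ∈ spectralSubspace T (Set.Icc (M - δ) M) →
        (Complex.exp (θ * Complex.I) * (inner ℂ (A ψ) (X ψ) : ℂ)).re ≤ -ε * ‖ψ‖ ^ 2 := by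
      intro ψ hψ
      rcases eq_or_ne ψ 0 with rfl | hψ0
      · simp
      · have hnz : ‖ψ‖ ≠ 0 := norm_ne_zero_iff.mpr hψ0
        set u := (‖ψ‖ : ℂ)⁻¹ • ψ with hudef
        have hu1 : ‖u‖ = 1 := by
          rw [hudef, norm_smul]
          simp only [norm_inv, Complex.norm_real, Real.norm_eq_abs, abs_norm]
          rw [inv_mul_cancel₀ hnz]
        have hum : u ∈ spectralSubspace T (Set.Icc (M - δ) M) :=
          bhk_smul_mem T _ _ hψ
        have hru : (Complex.exp (θ * Complex.I) * (inner ℂ (A u) (X u) : ℂ)).re ∈ Sδ :=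
          ⟨u, hum, hu1, rfl⟩
        have hle : (Complex.exp (θ * Complex.I) * (inner ℂ (A u) (X u) : ℂ)).re ≤ sSup Sδ :=
          le_csSup (hbdd δ θ) hru
        have hinner : (inner ℂ (A u) (X u) : ℂ)
            = (((‖ψ‖ ^ 2)⁻¹ : ℝ) : ℂ) * (inner ℂ (A ψ) (X ψ) : ℂ) := by
          rw [hudef, map_smul, map_smul, inner_smul_left, inner_smul_right]
          rw [← mul_assoc]
          congr 1
          rw [map_inv₀, Complex.conj_ofReal]
          push_cast
          rw [← mul_inv]
          congr 1
          ring
        have hre2 : (Complex.exp (θ * Complex.I) * (inner ℂ (A u) (X u) : ℂ)).re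
            = (‖ψ‖ ^ 2)⁻¹ * (Complex.exp (θ * Complex.I) * (inner ℂ (A ψ) (X ψ) : ℂ)).re := by
          rw [hinner]
          rw [show Complex.exp (θ * Complex.I) * ((((‖ψ‖ ^ 2)⁻¹ : ℝ) : ℂ)
            * (inner ℂ (A ψ) (X ψ) : ℂ)) = (((‖ψ‖ ^ 2)⁻¹ : ℝ) : ℂ)
            * (Complex.exp (θ * Complex.I) * (inner ℂ (A ψ) (X ψ) : ℂ)) by ring]
          exact Complex.re_ofReal_mul _ _
        rw [hre2] at hle
        have hn2 : (0:ℝ) < ‖ψ‖ ^ 2 := by positivity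
        have := mul_le_mul_of_nonneg_left hle hn2.le
        rw [← mul_assoc, mul_inv_cancel₀ (by positivity : (‖ψ‖:ℝ)^2 ≠ 0), one_mul] at this
        calc (Complex.exp (θ * Complex.I) * (inner ℂ (A ψ) (X ψ) : ℂ)).re
            ≤ ‖ψ‖ ^ 2 * sSup Sδ := this
          _ = -ε * ‖ψ‖ ^ 2 := by rw [hεdef]; ring
    -- constants
    set Cc := ‖A‖ * ‖X‖ with hCdef
    have hCc : 0 ≤ Cc := by rw [hCdef]; positivity
    set B := 2 * ε + 2 * Cc with hBdef
    have hB : 0 ≤ B := by rw [hBdef]; linarith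
    set D := B ^ 2 / δ + ‖X‖ ^ 2 with hDdef
    have hD : 0 ≤ D := by rw [hDdef]; positivity
    set t := min 1 (ε / (D + 1)) with htdef
    have ht : 0 < t := lt_min one_pos (by positivity)
    have ht1 : t ≤ 1 := min_le_left _ _
    have ht2 : t * (D + 1) ≤ ε := by
      have := min_le_right 1 (ε / (D + 1))
      rw [← htdef] at this
      rw [div_eq_mul_inv] at this
      have h := mul_le_mul_of_nonneg_right this (by positivity : (0:ℝ) ≤ D + 1)
      rwa [mul_assoc, inv_mul_cancel₀ (by positivity : D + 1 ≠ 0), mul_one] at h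
    set lam := (t : ℂ) * Complex.exp (θ * Complex.I) with hlamdef
    have habs : ‖lam‖ = t := by
      rw [hlamdef, norm_mul, Complex.norm_exp_ofReal_mul_I, mul_one,
        Complex.norm_of_nonneg ht.le]
    -- per-unit-vector estimate
    have hvec : ∀ φ : H, ‖φ‖ = 1 → ‖(A + lam • X) φ‖ ^ 2 ≤ M - t * ε := by
      intro φ hφ1
      set g := bhkGcut M δ with hgdef2
      have hg : Continuous g := bhkGcut_cont M δ
      set φ₁ := cfc g T φ with hφ₁def
      set φ₂ := φ - φ₁ with hφ₂def
      have hgz : ∀ x ≤ M - δ, g x = 0 := fun x hx => bhkGcut_zero M δ hδ hx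
      have hφ₁mem : φ₁ ∈ spectralSubspace T (Set.Icc (M - δ) M) :=
        bhk_memSS T hT hspec g hg hgz φ
      have habs1 : ∀ x ∈ spectrum ℝ T, |g x| ≤ 1 := fun x hx => by
        have h := bhkGcut_mem M δ x
        rw [abs_le]
        exact ⟨by linarith [h.1], h.2⟩
      have h₁ : ‖φ₁‖ ≤ 1 := by
        have := bhk_cfc_norm_le T hT g hg habs1 φ
        rw [hφ1] at this
        exact this
      have h₂ : ‖φ₂‖ ≤ 1 := by
        rw [hφ₂def, hφ₁def, bhk_phi2_eq T hT g hg φ]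
        have habs2 : ∀ x ∈ spectrum ℝ T, |1 - g x| ≤ 1 := fun x hx => by
          have h := bhkGcut_mem M δ x
          rw [abs_le]
          constructor <;> [linarith [h.2]; linarith [h.1]]
        have := bhk_cfc_norm_le T hT _ (by fun_prop) habs2 φ
        rw [hφ1] at this
        exact this
      have hAφ : ‖A φ‖ ^ 2 ≤ M - δ * ‖φ₂‖ ^ 2 := by
        have h := bhk_upper T hT hδ hspec φ
        rw [hTdef, bhkT_inner, hφ1] at h
        rw [hφ₂def, hφ₁def]
        simpa using h
      set s := ‖φ₂‖ with hsdef
      have hs0 : 0 ≤ s := norm_nonneg _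
      have hφ₁lb : 1 - s ≤ ‖φ₁‖ := by
        calc 1 - s = ‖φ‖ - ‖φ₂‖ := by rw [hφ1, hsdef]
          _ ≤ ‖φ - φ₂‖ := norm_sub_norm_le _ _
          _ = ‖φ₁‖ := by rw [show φ - φ₂ = φ₁ by rw [hφ₂def]; abel]
      have hφsum : φ = φ₁ + φ₂ := by rw [hφ₂def]; abel
      have hdec : (inner ℂ (A φ) (X φ) : ℂ)
          = (inner ℂ (A φ₁) (X φ₁) : ℂ) + (inner ℂ (A φ₁) (X φ₂) : ℂ)
            + (inner ℂ (A φ₂) (X φ) : ℂ) := by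
        rw [hφ₂def, map_sub, map_sub, inner_sub_right, inner_sub_left]
        ring
      have hb1 : (Complex.exp (θ * Complex.I) * (inner ℂ (A φ₁) (X φ₁) : ℂ)).re
          ≤ -ε * ‖φ₁‖ ^ 2 := hub φ₁ hφ₁mem
      have hgen : ∀ (a b : H), ‖a‖ ≤ 1 → ‖b‖ ≤ 1 →
          (Complex.exp (θ * Complex.I) * (inner ℂ (A a) (X b) : ℂ)).re
            ≤ Cc * ‖a‖ * ‖b‖ := by
        intro a b ha hb
        calc (Complex.exp (θ * Complex.I) * (inner ℂ (A a) (X b) : ℂ)).re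
            ≤ ‖Complex.exp (θ * Complex.I) * (inner ℂ (A a) (X b) : ℂ)‖ :=
              Complex.re_le_norm _
          _ = ‖(inner ℂ (A a) (X b) : ℂ)‖ := by
              rw [norm_mul, Complex.norm_exp_ofReal_mul_I, one_mul]
          _ ≤ ‖A a‖ * ‖X b‖ := by
              simpa using norm_inner_le_norm (𝕜 := ℂ) (A a) (X b)
          _ ≤ (‖A‖ * ‖a‖) * (‖X‖ * ‖b‖) :=
              mul_le_mul (A.le_opNorm a) (X.le_opNorm b) (norm_nonneg _) (by positivity)
          _ = (‖A‖ * ‖X‖) * ‖a‖ * ‖b‖ := by ring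
          _ = Cc * ‖a‖ * ‖b‖ := by rw [hCdef]
      have hb2 : (Complex.exp (θ * Complex.I) * (inner ℂ (A φ₁) (X φ₂) : ℂ)).re ≤ Cc * s := by
        have := hgen φ₁ φ₂ h₁ h₂
        have h' : Cc * ‖φ₁‖ * ‖φ₂‖ ≤ Cc * s := by
          have h'' := mul_le_mul_of_nonneg_right
            (mul_le_mul_of_nonneg_left h₁ hCc) (norm_nonneg φ₂)
          rw [mul_one] at h''
          rw [hsdef]
          exact h''
        linarith
      have hb3 : (Complex.exp (θ * Complex.I) * (inner ℂ (A φ₂) (X φ) : ℂ)).re ≤ Cc * s := by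
        have := hgen φ₂ φ h₂ (le_of_eq hφ1)
        have h' : Cc * ‖φ₂‖ * ‖φ‖ ≤ Cc * s := by
          rw [hsdef, hφ1, mul_one]
        linarith
      have hres : (Complex.exp (θ * Complex.I) * (inner ℂ (A φ) (X φ) : ℂ)).re
          ≤ -ε + B * s := by
        rw [hdec, mul_add, mul_add, Complex.add_re, Complex.add_re]
        have hsq : (1 - s) ^ 2 ≤ ‖φ₁‖ ^ 2 := by nlinarith [hφ₁lb, hs0, h₂]
        have hfin : -ε * ‖φ₁‖ ^ 2 ≤ -ε + 2 * ε * s := by nlinarith [hε, hs0]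
        rw [hBdef]
        linarith
      -- final arithmetic
      rw [hexp lam φ]
      have hre : (lam * (inner ℂ (A φ) (X φ) : ℂ)).re
          = t * (Complex.exp (θ * Complex.I) * (inner ℂ (A φ) (X φ) : ℂ)).re := by
        rw [hlamdef, mul_assoc]
        exact Complex.re_ofReal_mul _ _
      have hXn : ‖X φ‖ ≤ ‖X‖ := by
        have := X.le_opNorm φ
        rwa [hφ1, mul_one] at this
      have habs2 : ‖lam‖ ^ 2 * ‖X φ‖ ^ 2 ≤ t ^ 2 * ‖X‖ ^ 2 := by
        rw [habs]
        exact mul_le_mul_of_nonneg_left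
          (by nlinarith [hXn, norm_nonneg (X φ)]) (sq_nonneg t)
      have hQ : δ * (B ^ 2 / δ) = B ^ 2 := by field_simp
      have harith := bhk_arith δ ε t B (B ^ 2 / δ) (‖X‖ ^ 2) s hδ hε ht ht1 hQ
        (by rw [hDdef] at ht2; linarith) hs0 (by positivity) hB
      have h2tR : t * (Complex.exp (θ * Complex.I) * (inner ℂ (A φ) (X φ) : ℂ)).re
          ≤ t * (-ε + B * s) := mul_le_mul_of_nonneg_left hres ht.le
      rw [hre]
      linarith [hAφ, habs2, harith, h2tR]
    -- operator norm bound
    have hub2 : ‖A + lam • X‖ ≤ Real.sqrt (M - t * ε) := by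
      apply opNorm_le_bound _ (Real.sqrt_nonneg _)
      intro x
      rcases eq_or_ne x 0 with rfl | hx0
      · simp
      · have hnx : ‖x‖ ≠ 0 := norm_ne_zero_iff.mpr hx0
        have hu1 : ‖(‖x‖ : ℂ)⁻¹ • x‖ = 1 := by
          rw [norm_smul]
          simp only [norm_inv, Complex.norm_real, Real.norm_eq_abs, abs_norm]
          rw [inv_mul_cancel₀ hnx]
        have hv := hvec _ hu1
        have hsq : ‖(A + lam • X) ((‖x‖ : ℂ)⁻¹ • x)‖ ≤ Real.sqrt (M - t * ε) := by
          rw [← Real.sqrt_sq (norm_nonneg ((A + lam • X) ((‖x‖ : ℂ)⁻¹ • x)))]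
          exact Real.sqrt_le_sqrt hv
        have hxid : (A + lam • X) x = (‖x‖ : ℂ) • ((A + lam • X) ((‖x‖ : ℂ)⁻¹ • x)) := by
          rw [map_smul, smul_smul, mul_inv_cancel₀ (by exact_mod_cast hnx), one_smul]
        rw [hxid, norm_smul]
        simp only [Complex.norm_real, Real.norm_eq_abs, abs_norm]
        rw [mul_comm]
        exact mul_le_mul_of_nonneg_right hsq (norm_nonneg x)
    -- contradiction
    have hge := hbirk lam
    have hgele : ‖A‖ ≤ Real.sqrt (M - t * ε) := le_trans hge hub2
    rcases le_or_gt 0 (M - t * ε) with hpos | hneg2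
    · have hsq2 : ‖A‖ ^ 2 ≤ M - t * ε := by
        nlinarith [Real.sq_sqrt hpos, Real.sqrt_nonneg (M - t * ε), norm_nonneg A]
      rw [← hMdef] at hsq2
      nlinarith [mul_pos ht hε]
    · have hz : Real.sqrt (M - t * ε) = 0 := Real.sqrt_eq_zero'.mpr hneg2.le
      rw [hz] at hgele
      linarith
  · intro hsup lam
    rcases eq_or_ne lam 0 with rfl | hlam
    · simp
    set r := ‖lam‖ with hrdef
    have hr : 0 < r := by rwa [hrdef, norm_pos_iff]
    obtain ⟨θ, hθ, hlamEq⟩ : ∃ θ ∈ Set.Ico (0:ℝ) (2*π),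
        lam = (r : ℂ) * Complex.exp (θ * Complex.I) := by
      rcases le_or_gt 0 lam.arg with h0 | h0
      · refine ⟨lam.arg, ⟨h0, ?_⟩, ?_⟩
        · have := Complex.arg_le_pi lam
          nlinarith [Real.pi_pos]
        · rw [hrdef, Complex.norm_mul_exp_arg_mul_I]
      · refine ⟨lam.arg + 2*π,
          ⟨by linarith [Complex.neg_pi_lt_arg lam, Real.pi_pos], by linarith⟩, ?_⟩
        have he : Complex.exp ((lam.arg + 2*π : ℝ) * Complex.I)
            = Complex.exp (lam.arg * Complex.I) := by
          push_cast
          rw [add_mul, Complex.exp_add]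
          simp [Complex.exp_two_pi_mul_I]
        rw [he, hrdef, Complex.norm_mul_exp_arg_mul_I]
    have key : ∀ ζ : ℝ, 0 < ζ → M - ζ ≤ ‖A + lam • X‖ ^ 2 := by
      intro ζ hζ
      have hδ : (0:ℝ) < ζ / 2 := by linarith
      set η := ζ / (2 * (2 * r + 1)) with hηdef
      have hη : 0 < η := by rw [hηdef]; positivity
      have hS := hsup (ζ / 2) hδ θ hθ
      obtain ⟨ρ, hρS, hρgt⟩ := exists_lt_of_lt_csSup (hne (ζ/2) hδ θ)
        (show -η < sSup _ by linarith)
      obtain ⟨φ, hφm, hφ1, rfl⟩ := hρS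
      have hlow : M - ζ/2 ≤ ‖A φ‖ ^ 2 := by
        have h := bhk_lower T hT hspec hφm
        rw [hTdef, bhkT_inner, hφ1] at h
        simpa using h
      have hre : (lam * (inner ℂ (A φ) (X φ) : ℂ)).re
          = r * (Complex.exp (θ * Complex.I) * (inner ℂ (A φ) (X φ) : ℂ)).re := by
        rw [hlamEq, mul_assoc]
        exact Complex.re_ofReal_mul _ _
      have h2 : ‖(A + lam • X) φ‖ ≤ ‖A + lam • X‖ := by
        simpa [hφ1] using (A + lam • X).le_opNorm φ
      have h3 : ‖(A + lam • X) φ‖ ^ 2 ≤ ‖A + lam • X‖ ^ 2 :=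
        pow_le_pow_left₀ (norm_nonneg _) h2 2
      have h4 := hexp lam φ
      have h5 : 0 ≤ ‖lam‖ ^ 2 * ‖X φ‖ ^ 2 := by positivity
      have h6 : 2 * r * η ≤ ζ / 2 := by
        have he : η * (2 * (2 * r + 1)) = ζ := by
          rw [hηdef]; field_simp
        nlinarith [hη, hr]
      nlinarith [hρgt, hr]
    have hM2 : M ≤ ‖A + lam • X‖ ^ 2 := by
      by_contra hc
      push_neg at hc
      have := key ((M - ‖A + lam • X‖ ^ 2) / 2) (by linarith)
      linarith
    show ‖A‖ ≤ ‖A + lam • X‖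
    by_contra hc
    push_neg at hc
    have : ‖A + lam • X‖ ^ 2 < ‖A‖ ^ 2 := by
      nlinarith [norm_nonneg (A + lam • X), norm_nonneg A]
    rw [← hMdef] at this
    linarith
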